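/- (Correctness of reduction rule R1) Let G=(V,E) be a graph, π a 2-partition of V, and K,t,f nonnegative integers. If v∈V satisfies c_π(v) > t+f, then every (K,t)-feasible flipping set F for π with |F| ≤ f must contain v. Equivalently: if |F| ≤ f and v∉F, then c_{π⊖F}(v) > t. -/
import Mathlib


open Finset

variable {V : Type*} [Fintype V] [DecidableEq V]

/-- A 2-partition of the vertex set is given by an indicator `π : V → Bool`
(the two clusters are the preimages of `true` and `false`).
Two vertices `u ≠ v` are in conflict if they are in the same cluster but not adjacent,
or in different clusters but adjacent. -/
def Conflict (G : SimpleGraph V) (π : V → Bool) (u v : V) : Prop :=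
  u ≠ v ∧ ((π u = π v) ↔ ¬ G.Adj u v)

instance (G : SimpleGraph V) [DecidableRel G.Adj] (π : V → Bool) (u v : V) :
    Decidable (Conflict G π u v) := by
  unfold Conflict; infer_instance

/-- `C_π(v)` : the set of vertices in conflict with `v`. -/
def conflictSet (G : SimpleGraph V) [DecidableRel G.Adj] (π : V → Bool) (v : V) : Finset V :=
  Finset.univ.filter (fun u => Conflict G π v u)

/-- `c_π(v)` : the conflict number of `v`. -/
def cNum (G : SimpleGraph V) [DecidableRel G.Adj] (π : V → Bool) (v : V) : ℕ :=
  (conflictSet G π v).card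

/-- Flipping the set `F` : moving every vertex of `F` to the other cluster. -/
def flipSet (π : V → Bool) (F : Finset V) : V → Bool :=
  fun v => if v ∈ F then !(π v) else π v

/-- `h₁(π)` : the total conflict number. -/
def h1 (G : SimpleGraph V) [DecidableRel G.Adj] (π : V → Bool) : ℕ :=
  ∑ v, cNum G π v

/-- `h₂(π)` : the sum of squared conflict numbers. -/
def h2 (G : SimpleGraph V) [DecidableRel G.Adj] (π : V → Bool) : ℕ :=
  ∑ v, (cNum G π v) ^ 2

/-- correctness of rule R1: if `c_π(v) > t + f`, then every
`(K,t)`-feasible flipping set of size at most `f` must contain `v`; equivalently,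
if `|F| ≤ f` and `v ∉ F`, then `c_{π⊖F}(v) > t` (so `F` is not `(K,t)`-feasible). -/
theorem rule_R1 (G : SimpleGraph V) [DecidableRel G.Adj] (π : V → Bool) (t f : ℕ)
    (v : V) (hv : cNum G π v > t + f)
    (F : Finset V) (hF : F.card ≤ f) (hvF : v ∉ F) :
    cNum G (flipSet π F) v > t := by
  have hsub : conflictSet G π v \ F ⊆ conflictSet G (flipSet π F) v := by
    intro u hu
    simp only [mem_sdiff, conflictSet, mem_filter, mem_univ, true_and] at hu ⊢
    obtain ⟨⟨hne, hiff⟩, huF⟩ := hu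
    refine ⟨hne, ?_⟩
    simp only [flipSet, if_neg huF, if_neg hvF]
    exact hiff
  have h1 : (conflictSet G π v \ F).card ≤ cNum G (flipSet π F) v :=
    card_le_card hsub
  have h2 : cNum G π v - F.card ≤ (conflictSet G π v \ F).card := by
    calc cNum G π v - F.card ≤ (conflictSet G π v).card - (conflictSet G π v ∩ F).card :=
          Nat.sub_le_sub_left (card_le_card inter_subset_right) _
      _ = (conflictSet G π v \ F).card := by
          have := card_sdiff_add_card_inter (conflictSet G π v) F
          omega
  omega
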